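/- Let P ∈ ℂ[X^{±1},Y^{±1}] be exact (η|_C is exact). Then any volume function V : C → ℝ extends continuously to the smooth projective model Ĉ of C. -/

import Mathlib

set_option maxHeartbeats 1000000

open MvPolynomial

/-- `η = log|y| d(arg x) − log|x| d(arg y)` as a continuous `ℝ`-linear functional. -/
noncomputable def etaL (p : ℂ × ℂ) : (ℂ × ℂ) →L[ℝ] ℝ :=
  Real.log ‖p.2‖ •
      (Complex.imCLM.comp ((p.1⁻¹ • ContinuousLinearMap.fst ℂ ℂ ℂ).restrictScalars ℝ)) -
    Real.log ‖p.1‖ •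
      (Complex.imCLM.comp ((p.2⁻¹ • ContinuousLinearMap.snd ℂ ℂ ℂ).restrictScalars ℝ))

/-- The smooth part `C` of the zero set of `P` in `(ℂ*)²`. -/
def Csm (P : MvPolynomial (Fin 2) ℂ) : Set (ℂ × ℂ) :=
  {z | z.1 ≠ 0 ∧ z.2 ≠ 0 ∧ eval ![z.1, z.2] P = 0 ∧
    (eval ![z.1, z.2] (pderiv 0 P) ≠ 0 ∨ eval ![z.1, z.2] (pderiv 1 P) ≠ 0)}

open Complex Metric Filter Set

/-- The complex modulus as an absolute value. -/
noncomputable def Complex.abs : AbsoluteValue ℂ ℝ where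
  toFun z := ‖z‖
  map_mul' := norm_mul
  nonneg' := norm_nonneg
  eq_zero' _ := norm_eq_zero
  add_le' := norm_add_le

lemma Complex.abs_ofReal (r : ℝ) : Complex.abs (r : ℂ) = |r| := by
  show ‖(r : ℂ)‖ = |r|; simp

lemma Complex.abs_natCast (n : ℕ) : Complex.abs (n : ℂ) = n := by
  show ‖(n : ℂ)‖ = n; simp

lemma Complex.abs_exp_ofReal_mul_I (x : ℝ) : Complex.abs (Complex.exp (x * Complex.I)) = 1 :=
  Complex.norm_exp_ofReal_mul_I x

lemma Complex.abs_I : Complex.abs Complex.I = 1 := by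
  show ‖Complex.I‖ = 1; simp

lemma Complex.abs_mul_exp_arg_mul_I (x : ℂ) :
    ((Complex.abs x : ℝ) : ℂ) * Complex.exp (Complex.arg x * Complex.I) = x :=
  Complex.norm_mul_exp_arg_mul_I x

lemma Complex.continuous_abs : Continuous Complex.abs := continuous_norm

lemma Complex.norm_eq_abs (z : ℂ) : ‖z‖ = Complex.abs z := rfl

@[simp] lemma Complex.abs_apply (z : ℂ) : Complex.abs z = ‖z‖ := rfl

/-- Lipschitz-type estimate for the real logarithm away from `0`. -/
lemma hlp_log_lip {a b m : ℝ} (hm : 0 < m) (ha : m ≤ a) (hb : m ≤ b) :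
    |Real.log a - Real.log b| ≤ |a - b| / m := by
  have key : ∀ x y : ℝ, m ≤ x → m ≤ y → x ≤ y → Real.log y - Real.log x ≤ (y - x) / m := by
    intro x y hx hy hxy
    have hx0 : 0 < x := lt_of_lt_of_le hm hx
    have hy0 : 0 < y := lt_of_lt_of_le hm hy
    have h1 : Real.log y - Real.log x = Real.log (y / x) :=
      (Real.log_div hy0.ne' hx0.ne').symm
    rw [h1]
    have h2 : Real.log (y / x) ≤ y / x - 1 := Real.log_le_sub_one_of_pos (by positivity)
    have h3 : y / x - 1 = (y - x) / x := by field_simp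
    have h4 : (y - x) / x ≤ (y - x) / m := by gcongr
    linarith
  rcases le_total a b with h | h
  · have h1 := key a b ha hb h
    have h2 : 0 ≤ Real.log b - Real.log a := by
      have := Real.log_le_log (lt_of_lt_of_le hm ha) h
      linarith
    rw [abs_sub_comm, _root_.abs_of_nonneg h2, abs_sub_comm, _root_.abs_of_nonneg (by linarith : (0:ℝ) ≤ b - a)]
    exact h1
  · have h1 := key b a hb ha h
    have h2 : 0 ≤ Real.log a - Real.log b := by
      have := Real.log_le_log (lt_of_lt_of_le hm hb) h
      linarith
    rw [_root_.abs_of_nonneg h2, _root_.abs_of_nonneg (by linarith : (0:ℝ) ≤ a - b)]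
    exact h1

/-- `s · log(1/s) ≤ 2√s` on `(0,1]`. -/
lemma hlp_slog {s : ℝ} (h0 : 0 < s) : s * (-Real.log s) ≤ 2 * Real.sqrt s := by
  have hs : 0 < Real.sqrt s := Real.sqrt_pos.mpr h0
  have h2 : Real.log s = 2 * Real.log (Real.sqrt s) := by
    rw [Real.log_sqrt h0.le]; ring
  have h3 : Real.log (Real.sqrt s)⁻¹ ≤ (Real.sqrt s)⁻¹ - 1 :=
    Real.log_le_sub_one_of_pos (by positivity)
  rw [Real.log_inv] at h3
  have h4 : -Real.log s ≤ 2 * (Real.sqrt s)⁻¹ := by rw [h2]; linarith [inv_pos.mpr hs]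
  calc s * (-Real.log s) ≤ s * (2 * (Real.sqrt s)⁻¹) := by
        apply mul_le_mul_of_nonneg_left h4 h0.le
    _ = 2 * (s / Real.sqrt s) := by ring
    _ = 2 * Real.sqrt s := by rw [Real.div_sqrt]

/-- Cauchy criterion for existence of a limit of a real-valued function along a filter. -/
lemma hlp_cauchy {α : Type*} {g : α → ℝ} {l : Filter α} [l.NeBot]
    (H : ∀ δ : ℝ, 0 < δ → ∃ S ∈ l, ∀ a ∈ S, ∀ b ∈ S, |g a - g b| < δ) :
    ∃ L, Filter.Tendsto g l (nhds L) := by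
  have hc : Cauchy (Filter.map g l) := by
    rw [Metric.cauchy_iff]
    refine ⟨Filter.map_neBot, fun δ hδ => ?_⟩
    obtain ⟨S, hS, h⟩ := H δ hδ
    refine ⟨g '' S, Filter.image_mem_map hS, ?_⟩
    rintro x ⟨a, ha, rfl⟩ y ⟨b, hb, rfl⟩
    simpa [Real.dist_eq] using h a ha b hb
  exact CompleteSpace.complete hc

/-- Factorization of an analytic function at `0` that does not vanish identically. -/
lemma hlp_factor {f : ℂ → ℂ} (hf : AnalyticAt ℂ f 0)
    (hne : ¬ ∀ᶠ z in nhds (0 : ℂ), f z = 0) :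
    ∃ (n : ℕ) (g : ℂ → ℂ), AnalyticAt ℂ g 0 ∧ g 0 ≠ 0 ∧
      ∀ᶠ z in nhds (0 : ℂ), f z = z ^ n * g z := by
  have hord : analyticOrderAt f 0 ≠ ⊤ := fun h => hne (analyticOrderAt_eq_top.mp h)
  obtain ⟨n, hn⟩ := ENat.ne_top_iff_exists.mp hord
  obtain ⟨g, hg, hg0, hev⟩ := (hf.analyticOrderAt_eq_natCast (n := n)).mp hn.symm
  exact ⟨n, g, hg, hg0, hev.mono fun z hz => by simpa using hz⟩

/-- If `P` is exact (there is a volume function `V` with `dV = η|_C`), then `V` extends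
continuously to the smooth projective model `Ĉ` of `C`: along any local analytic
parametrization `φ` of a punctured neighborhood of a point of `Ĉ \ C` (mapping the
punctured disk into `C`), the function `V ∘ φ` has a finite limit at the puncture. -/
theorem volume_function_extends_continuously
    (P : MvPolynomial (Fin 2) ℂ) (V : ℂ × ℂ → ℝ)
    (hV : ∀ z ∈ Csm P, HasFDerivWithinAt V (etaL z) (Csm P) z)
    (φ : ℂ → ℂ × ℂ) (r : ℝ) (hr : 0 < r)
    (hφ1 : ∀ t ∈ Metric.ball (0 : ℂ) r, AnalyticAt ℂ (fun s => (φ s).1) t)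
    (hφ2 : ∀ t ∈ Metric.ball (0 : ℂ) r, AnalyticAt ℂ (fun s => (φ s).2) t)
    (hφC : ∀ t ∈ Metric.ball (0 : ℂ) r, t ≠ 0 → φ t ∈ Csm P) :
    ∃ L : ℝ, Filter.Tendsto (fun t => V (φ t))
      (nhdsWithin 0 (Metric.ball (0 : ℂ) r \ {0})) (nhds L) := by
  classical
  set x : ℂ → ℂ := fun s => (φ s).1 with hxdef
  set y : ℂ → ℂ := fun s => (φ s).2 with hydef
  set g : ℂ → ℝ := fun t => V (φ t) with hgdef
  have h0r : (0 : ℂ) ∈ Metric.ball (0 : ℂ) r := Metric.mem_ball_self hr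
  have hxne0 : ∀ t ∈ Metric.ball (0 : ℂ) r, t ≠ 0 → x t ≠ 0 := fun t ht h => (hφC t ht h).1
  have hyne0 : ∀ t ∈ Metric.ball (0 : ℂ) r, t ≠ 0 → y t ≠ 0 := fun t ht h => (hφC t ht h).2.1
  -- the coordinates do not vanish identically near 0
  have hball_mem : Metric.ball (0 : ℂ) r ∈ nhdsWithin (0 : ℂ) {(0:ℂ)}ᶜ :=
    mem_nhdsWithin_of_mem_nhds (Metric.ball_mem_nhds _ hr)
  have hnev : ∀ (f : ℂ → ℂ), (∀ t ∈ Metric.ball (0 : ℂ) r, t ≠ 0 → f t ≠ 0) →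
      ¬ ∀ᶠ z in nhds (0 : ℂ), f z = 0 := by
    intro f hf h
    have h1 : ∀ᶠ z in nhdsWithin (0 : ℂ) {(0:ℂ)}ᶜ, f z = 0 := h.filter_mono nhdsWithin_le_nhds
    have h2 : ∀ᶠ z in nhdsWithin (0 : ℂ) {(0:ℂ)}ᶜ,
        f z = 0 ∧ z ∈ Metric.ball (0 : ℂ) r ∧ z ∈ ({(0:ℂ)}ᶜ : Set ℂ) :=
      h1.and ((by exact hball_mem : ∀ᶠ z in nhdsWithin (0 : ℂ) {(0:ℂ)}ᶜ,
        z ∈ Metric.ball (0 : ℂ) r).and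
        (by exact self_mem_nhdsWithin : ∀ᶠ z in nhdsWithin (0 : ℂ) {(0:ℂ)}ᶜ,
        z ∈ ({(0:ℂ)}ᶜ : Set ℂ)))
    obtain ⟨z, hz0, hzb, hzc⟩ := h2.exists
    exact hf z hzb hzc hz0
  obtain ⟨p, u, hu, hu0, hxeq⟩ := hlp_factor (hφ1 0 h0r) (hnev x hxne0)
  obtain ⟨q, v, hv, hv0, hyeq⟩ := hlp_factor (hφ2 0 h0r) (hnev y hyne0)
  -- choice of a good radius ε
  have hbig : ∀ᶠ z in nhds (0 : ℂ), (x z = z ^ p * u z ∧ y z = z ^ q * v z) ∧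
      (u z ≠ 0 ∧ v z ≠ 0) ∧ (AnalyticAt ℂ u z ∧ AnalyticAt ℂ v z) :=
    (hxeq.and hyeq).and (((hu.continuousAt.eventually_ne hu0).and
      (hv.continuousAt.eventually_ne hv0)).and
      (hu.eventually_analyticAt.and hv.eventually_analyticAt))
  obtain ⟨ε₀, hε₀, hballprop⟩ := Metric.eventually_nhds_iff_ball.mp hbig
  set ε : ℝ := min (min ε₀ r) 1 with hεdef
  have hε : 0 < ε := lt_min (lt_min hε₀ hr) one_pos
  have hεr : ε ≤ r := le_trans (min_le_left _ _) (min_le_right _ _)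
  have hε1 : ε ≤ 1 := min_le_right _ _
  have hεε₀ : ε ≤ ε₀ := le_trans (min_le_left _ _) (min_le_left _ _)
  set ε2 : ℝ := ε / 2 with hε2def
  have hε2 : 0 < ε2 := by positivity
  have hε2ε : ε2 < ε := by simp only [hε2def]; linarith
  have hε2one : ε2 < 1 := by simp only [hε2def]; linarith
  have hsub : Metric.closedBall (0 : ℂ) ε2 ⊆ Metric.ball (0 : ℂ) ε :=
    Metric.closedBall_subset_ball hε2ε
  have hP : ∀ z ∈ Metric.ball (0 : ℂ) ε, (x z = z ^ p * u z ∧ y z = z ^ q * v z) ∧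
      (u z ≠ 0 ∧ v z ≠ 0) ∧ (AnalyticAt ℂ u z ∧ AnalyticAt ℂ v z) :=
    fun z hz => hballprop z (Metric.ball_subset_ball hεε₀ hz)
  -- compactness bounds
  have hcompact : IsCompact (Metric.closedBall (0 : ℂ) ε2) := isCompact_closedBall _ _
  have hcne : (Metric.closedBall (0 : ℂ) ε2).Nonempty := ⟨0, by simp [hε2.le]⟩
  have hUanal : AnalyticOnNhd ℂ u (Metric.ball (0 : ℂ) ε) := fun z hz => (hP z hz).2.2.1
  have hVanal : AnalyticOnNhd ℂ v (Metric.ball (0 : ℂ) ε) := fun z hz => (hP z hz).2.2.2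
  have hu_cont : ContinuousOn u (Metric.closedBall (0 : ℂ) ε2) :=
    hUanal.continuousOn.mono hsub
  have hv_cont : ContinuousOn v (Metric.closedBall (0 : ℂ) ε2) :=
    hVanal.continuousOn.mono hsub
  have hdu_cont : ContinuousOn (deriv u) (Metric.closedBall (0 : ℂ) ε2) :=
    hUanal.deriv.continuousOn.mono hsub
  have hdv_cont : ContinuousOn (deriv v) (Metric.closedBall (0 : ℂ) ε2) :=
    hVanal.deriv.continuousOn.mono hsub
  have hune : ∀ z ∈ Metric.closedBall (0 : ℂ) ε2, u z ≠ 0 := fun z hz => (hP z (hsub hz)).2.1.1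
  have hvne : ∀ z ∈ Metric.closedBall (0 : ℂ) ε2, v z ≠ 0 := fun z hz => (hP z (hsub hz)).2.1.2
  -- minimum of |u|, |v|
  obtain ⟨m, hm0, hm⟩ : ∃ m : ℝ, 0 < m ∧ ∀ z ∈ Metric.closedBall (0 : ℂ) ε2,
      m ≤ Complex.abs (u z) ∧ m ≤ Complex.abs (v z) := by
    obtain ⟨zu, hzu, hzu_min⟩ := hcompact.exists_isMinOn hcne
      (Complex.continuous_abs.comp_continuousOn hu_cont)
    obtain ⟨zv, hzv, hzv_min⟩ := hcompact.exists_isMinOn hcne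
      (Complex.continuous_abs.comp_continuousOn hv_cont)
    refine ⟨min (Complex.abs (u zu)) (Complex.abs (v zv)), ?_, fun z hz => ⟨?_, ?_⟩⟩
    · exact lt_min (by simpa using hune zu hzu) (by simpa using hvne zv hzv)
    · exact le_trans (min_le_left _ _) (hzu_min hz)
    · exact le_trans (min_le_right _ _) (hzv_min hz)
  -- bound A for the logarithmic derivatives of u and v
  obtain ⟨A, hA0, hA⟩ : ∃ A : ℝ, 0 ≤ A ∧ ∀ z ∈ Metric.closedBall (0 : ℂ) ε2,
      Complex.abs (deriv u z / u z) ≤ A ∧ Complex.abs (deriv v z / v z) ≤ A := by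
    obtain ⟨C₁, hC₁⟩ := hcompact.exists_bound_of_continuousOn (hdu_cont.div hu_cont hune)
    obtain ⟨C₂, hC₂⟩ := hcompact.exists_bound_of_continuousOn (hdv_cont.div hv_cont hvne)
    refine ⟨max 0 (max C₁ C₂), le_max_left _ _, fun z hz => ⟨?_, ?_⟩⟩
    · exact le_trans (by simpa using hC₁ z hz)
        (le_trans (le_max_left _ _) (le_max_right _ _))
    · exact le_trans (by simpa using hC₂ z hz)
        (le_trans (le_max_right _ _) (le_max_right _ _))
  -- bound B₀ for |log |u||, |log |v||
  obtain ⟨B₀, hB₀0, hB₀⟩ : ∃ B₀ : ℝ, 0 ≤ B₀ ∧ ∀ z ∈ Metric.closedBall (0 : ℂ) ε2,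
      |Real.log (Complex.abs (u z))| ≤ B₀ ∧ |Real.log (Complex.abs (v z))| ≤ B₀ := by
    have hlu : ContinuousOn (fun z => Real.log (Complex.abs (u z)))
        (Metric.closedBall (0 : ℂ) ε2) := by
      apply Real.continuousOn_log.comp (Complex.continuous_abs.comp_continuousOn hu_cont)
      intro z hz
      simpa using hune z hz
    have hlv : ContinuousOn (fun z => Real.log (Complex.abs (v z)))
        (Metric.closedBall (0 : ℂ) ε2) := by
      apply Real.continuousOn_log.comp (Complex.continuous_abs.comp_continuousOn hv_cont)
      intro z hz
      simpa using hvne z hz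
    obtain ⟨C₁, hC₁⟩ := hcompact.exists_bound_of_continuousOn hlu
    obtain ⟨C₂, hC₂⟩ := hcompact.exists_bound_of_continuousOn hlv
    refine ⟨max 0 (max C₁ C₂), le_max_left _ _, fun z hz => ⟨?_, ?_⟩⟩
    · exact le_trans (by simpa using hC₁ z hz)
        (le_trans (le_max_left _ _) (le_max_right _ _))
    · exact le_trans (by simpa using hC₂ z hz)
        (le_trans (le_max_right _ _) (le_max_right _ _))
  -- bound Kv for the derivatives of u and v
  obtain ⟨Kv, hKv0, hKv⟩ : ∃ Kv : ℝ, 0 ≤ Kv ∧ ∀ z ∈ Metric.closedBall (0 : ℂ) ε2,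
      ‖deriv u z‖ ≤ Kv ∧ ‖deriv v z‖ ≤ Kv := by
    obtain ⟨C₁, hC₁⟩ := hcompact.exists_bound_of_continuousOn hdu_cont
    obtain ⟨C₂, hC₂⟩ := hcompact.exists_bound_of_continuousOn hdv_cont
    refine ⟨max 0 (max C₁ C₂), le_max_left _ _, fun z hz =>
      ⟨le_trans (hC₁ z hz) (le_trans (le_max_left _ _) (le_max_right _ _)),
       le_trans (hC₂ z hz) (le_trans (le_max_right _ _) (le_max_right _ _))⟩⟩
  have h0m : (0:ℂ) ∈ Metric.closedBall (0:ℂ) ε2 := by simp [hε2.le]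
  -- Lipschitz bounds for u and v
  have hlip : ∀ t ∈ Metric.closedBall (0:ℂ) ε2,
      Complex.abs (u t - u 0) ≤ Kv * Complex.abs t ∧
      Complex.abs (v t - v 0) ≤ Kv * Complex.abs t := by
    intro t ht
    have key : ∀ (f : ℂ → ℂ), AnalyticOnNhd ℂ f (Metric.ball (0:ℂ) ε) →
        (∀ z ∈ Metric.closedBall (0:ℂ) ε2, ‖deriv f z‖ ≤ Kv) →
        Complex.abs (f t - f 0) ≤ Kv * Complex.abs t := by
      intro f hf hbd
      have hd : ∀ z ∈ Metric.closedBall (0:ℂ) ε2, HasFDerivWithinAt f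
          ((ContinuousLinearMap.smulRight (1 : ℂ →L[ℂ] ℂ) (deriv f z)).restrictScalars ℝ)
          (Metric.closedBall (0:ℂ) ε2) z := fun z hz =>
        (((hf z (hsub hz)).differentiableAt.hasDerivAt.hasFDerivAt).restrictScalars
          ℝ).hasFDerivWithinAt
      have hnb : ∀ z ∈ Metric.closedBall (0:ℂ) ε2,
          ‖(ContinuousLinearMap.smulRight (1 : ℂ →L[ℂ] ℂ) (deriv f z)).restrictScalars ℝ‖
            ≤ Kv := by
        intro z hz
        rw [ContinuousLinearMap.norm_restrictScalars,
          ContinuousLinearMap.norm_smulRight_apply]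
        simpa using hbd z hz
      have := (convex_closedBall (0:ℂ) ε2).norm_image_sub_le_of_norm_hasFDerivWithin_le
        hd hnb h0m ht
      simpa using this
    exact ⟨key u hUanal (fun z hz => (hKv z hz).1), key v hVanal (fun z hz => (hKv z hz).2)⟩
  -- the functions c and W
  set c : ℂ → ℝ := fun z => (p:ℝ) * Real.log (Complex.abs (v z)) -
      (q:ℝ) * Real.log (Complex.abs (u z)) with hcdef
  set W : ℂ → ℂ := fun z => (Real.log (Complex.abs (y z)) : ℂ) * (deriv x z / x z) -
      (Real.log (Complex.abs (x z)) : ℂ) * (deriv y z / y z) with hWdef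
  set K1' : ℝ := 2 * B₀ * A with hK1'def
  set K2 : ℝ := ((p:ℝ) + q) * A with hK2def
  set Lc : ℝ := ((p:ℝ) + q) * Kv / m with hLcdef
  have hK2nn : 0 ≤ K2 := by positivity
  have hK1'nn : 0 ≤ K1' := by positivity
  have hLcnn : 0 ≤ Lc := by positivity
  -- per-coordinate logarithmic derivative and log-modulus formulas
  have coord : ∀ (f w : ℂ → ℂ) (n : ℕ), AnalyticOnNhd ℂ w (Metric.ball (0:ℂ) ε) →
      (∀ z ∈ Metric.ball (0:ℂ) ε, f z = z ^ n * w z ∧ w z ≠ 0) →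
      ∀ t : ℂ, t ≠ 0 → Complex.abs t ≤ ε2 →
      deriv f t / f t = (n:ℂ)/t + deriv w t / w t ∧
      Real.log (Complex.abs (f t)) =
        n * Real.log (Complex.abs t) + Real.log (Complex.abs (w t)) := by
    intro f w n hw hfw t ht0 htε
    have htb : t ∈ Metric.ball (0:ℂ) ε :=
      hsub (by simpa [Metric.mem_closedBall, Complex.dist_eq] using htε)
    have hwt := (hfw t htb).2
    have heq : f t = t ^ n * w t := (hfw t htb).1
    have hder : deriv f t = (n:ℂ) * t^(n-1) * w t + t^n * deriv w t := by
      have hev : f =ᶠ[nhds t] fun z => z ^ n * w z :=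
        Filter.eventuallyEq_of_mem (Metric.isOpen_ball.mem_nhds htb) (fun z hz => (hfw z hz).1)
      rw [hev.deriv_eq, deriv_fun_mul (differentiableAt_pow n) (hw t htb).differentiableAt,
        deriv_pow_field]
    constructor
    · rw [hder, heq]
      rcases Nat.eq_zero_or_pos n with hn | hn
      · subst hn; simp
      · have hpow : t ^ (n-1) * t = t ^ n := by
          rw [← pow_succ]; congr 1; omega
        have hden1 : t ^ n * w t ≠ 0 := mul_ne_zero (pow_ne_zero n ht0) hwt
        have hden2 : t * w t ≠ 0 := mul_ne_zero ht0 hwt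
        rw [div_add_div _ _ ht0 hwt, div_eq_div_iff hden1 hden2]
        calc ((n:ℂ) * t^(n-1) * w t + t^n * deriv w t) * (t * w t)
            = (n:ℂ) * (t^(n-1)*t) * (w t * w t) + t^n * deriv w t * t * w t := by ring
          _ = (n:ℂ) * t^n * (w t * w t) + t^n * deriv w t * t * w t := by rw [hpow]
          _ = ((n:ℂ) * w t + t * deriv w t) * (t^n * w t) := by ring
    · have h1 : Complex.abs (f t) = Complex.abs t ^ n * Complex.abs (w t) := by
        rw [heq, map_mul, map_pow]
      rw [h1, Real.log_mul (pow_ne_zero n (Complex.abs.ne_zero ht0))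
        (Complex.abs.ne_zero hwt), Real.log_pow]
  have hcoordx := coord x u p hUanal (fun z hz => ⟨(hP z hz).1.1, (hP z hz).2.1.1⟩)
  have hcoordy := coord y v q hVanal (fun z hz => ⟨(hP z hz).1.2, (hP z hz).2.1.2⟩)
  -- the key estimate E1
  have hE1 : ∀ t : ℂ, t ≠ 0 → Complex.abs t ≤ ε2 →
      Complex.abs (W t * t - (c t : ℂ)) ≤
        Complex.abs t * (K1' - K2 * Real.log (Complex.abs t)) := by
    intro t ht0 htε
    have htcb : t ∈ Metric.closedBall (0:ℂ) ε2 := by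
      simpa [Metric.mem_closedBall, Complex.dist_eq] using htε
    obtain ⟨hdx, hlx⟩ := hcoordx t ht0 htε
    obtain ⟨hdy, hly⟩ := hcoordy t ht0 htε
    have hid : W t * t - (c t : ℂ) =
        ((Real.log (Complex.abs t) : ℂ) * t) *
          ((q:ℂ) * (deriv u t / u t) - (p:ℂ) * (deriv v t / v t)) +
        t * ((Real.log (Complex.abs (v t)) : ℂ) * (deriv u t / u t) -
             (Real.log (Complex.abs (u t)) : ℂ) * (deriv v t / v t)) := by
      simp only [hWdef, hcdef]
      rw [hdx, hdy, hlx, hly]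
      push_cast
      field_simp
      ring
    rw [hid]
    have hlt0 : Real.log (Complex.abs t) ≤ 0 :=
      Real.log_nonpos (Complex.abs.nonneg t) (le_trans htε hε2one.le)
    have habsnn : (0:ℝ) ≤ Complex.abs t := Complex.abs.nonneg t
    have e1 : Complex.abs ((Real.log (Complex.abs t) : ℂ) * t) =
        (-Real.log (Complex.abs t)) * Complex.abs t := by
      rw [map_mul, Complex.abs_ofReal, abs_of_nonpos hlt0]
    have e2 : Complex.abs ((q:ℂ) * (deriv u t / u t) - (p:ℂ) * (deriv v t / v t)) ≤
        ((p:ℝ) + q) * A := by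
      calc Complex.abs ((q:ℂ) * (deriv u t / u t) - (p:ℂ) * (deriv v t / v t))
          ≤ Complex.abs ((q:ℂ) * (deriv u t / u t)) +
            Complex.abs ((p:ℂ) * (deriv v t / v t)) := by
            simpa [sub_eq_add_neg] using
              Complex.abs.add_le ((q:ℂ) * (deriv u t / u t)) (-((p:ℂ) * (deriv v t / v t)))
        _ = (q:ℝ) * Complex.abs (deriv u t / u t) + (p:ℝ) * Complex.abs (deriv v t / v t) := by
            rw [map_mul, map_mul, Complex.abs_natCast, Complex.abs_natCast]
        _ ≤ (q:ℝ) * A + (p:ℝ) * A := by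
            have h1 := (hA t htcb).1
            have h2 := (hA t htcb).2
            have hq : (0:ℝ) ≤ (q:ℝ) := Nat.cast_nonneg q
            have hp : (0:ℝ) ≤ (p:ℝ) := Nat.cast_nonneg p
            nlinarith [Complex.abs.nonneg (deriv u t / u t), Complex.abs.nonneg (deriv v t / v t)]
        _ = ((p:ℝ) + q) * A := by ring
    have e3 : Complex.abs ((Real.log (Complex.abs (v t)) : ℂ) * (deriv u t / u t) -
        (Real.log (Complex.abs (u t)) : ℂ) * (deriv v t / v t)) ≤ 2 * B₀ * A := by
      calc Complex.abs ((Real.log (Complex.abs (v t)) : ℂ) * (deriv u t / u t) -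
            (Real.log (Complex.abs (u t)) : ℂ) * (deriv v t / v t))
          ≤ Complex.abs ((Real.log (Complex.abs (v t)) : ℂ) * (deriv u t / u t)) +
            Complex.abs ((Real.log (Complex.abs (u t)) : ℂ) * (deriv v t / v t)) := by
            simpa [sub_eq_add_neg] using Complex.abs.add_le
              ((Real.log (Complex.abs (v t)) : ℂ) * (deriv u t / u t))
              (-((Real.log (Complex.abs (u t)) : ℂ) * (deriv v t / v t)))
        _ = |Real.log (Complex.abs (v t))| * Complex.abs (deriv u t / u t) +
            |Real.log (Complex.abs (u t))| * Complex.abs (deriv v t / v t) := by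
            rw [map_mul, map_mul, Complex.abs_ofReal, Complex.abs_ofReal]
        _ ≤ B₀ * A + B₀ * A := add_le_add
            (mul_le_mul (hB₀ t htcb).2 (hA t htcb).1 (Complex.abs.nonneg _) hB₀0)
            (mul_le_mul (hB₀ t htcb).1 (hA t htcb).2 (Complex.abs.nonneg _) hB₀0)
        _ = 2 * B₀ * A := by ring
    calc Complex.abs (((Real.log (Complex.abs t) : ℂ) * t) *
          ((q:ℂ) * (deriv u t / u t) - (p:ℂ) * (deriv v t / v t)) +
        t * ((Real.log (Complex.abs (v t)) : ℂ) * (deriv u t / u t) -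
             (Real.log (Complex.abs (u t)) : ℂ) * (deriv v t / v t)))
        ≤ Complex.abs (((Real.log (Complex.abs t) : ℂ) * t) *
            ((q:ℂ) * (deriv u t / u t) - (p:ℂ) * (deriv v t / v t))) +
          Complex.abs (t * ((Real.log (Complex.abs (v t)) : ℂ) * (deriv u t / u t) -
             (Real.log (Complex.abs (u t)) : ℂ) * (deriv v t / v t))) := Complex.abs.add_le _ _
      _ ≤ ((-Real.log (Complex.abs t)) * Complex.abs t) * (((p:ℝ) + q) * A) +
          Complex.abs t * (2 * B₀ * A) := by
          have e1' : Complex.abs (((Real.log (Complex.abs t) : ℂ) * t) *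
              ((q:ℂ) * (deriv u t / u t) - (p:ℂ) * (deriv v t / v t))) =
              ((-Real.log (Complex.abs t)) * Complex.abs t) *
              Complex.abs ((q:ℂ) * (deriv u t / u t) - (p:ℂ) * (deriv v t / v t)) := by
            rw [map_mul, e1]
          have e4 : Complex.abs (t * ((Real.log (Complex.abs (v t)) : ℂ) * (deriv u t / u t) -
              (Real.log (Complex.abs (u t)) : ℂ) * (deriv v t / v t))) =
              Complex.abs t * Complex.abs ((Real.log (Complex.abs (v t)) : ℂ) *
                (deriv u t / u t) -
              (Real.log (Complex.abs (u t)) : ℂ) * (deriv v t / v t)) := map_mul Complex.abs _ _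
          rw [e1', e4]
          refine add_le_add ?_ ?_
          · exact mul_le_mul_of_nonneg_left e2 (mul_nonneg (by linarith) habsnn)
          · exact mul_le_mul_of_nonneg_left e3 habsnn
      _ = Complex.abs t * (K1' - K2 * Real.log (Complex.abs t)) := by
          simp only [hK1'def, hK2def]; ring
  -- E2 : c is Lipschitz at 0
  have hE2 : ∀ t ∈ Metric.closedBall (0:ℂ) ε2, |c t - c 0| ≤ Lc * Complex.abs t := by
    intro t ht
    have hu1 : |Real.log (Complex.abs (u t)) - Real.log (Complex.abs (u 0))| ≤
        Kv * Complex.abs t / m := by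
      have h1 := hlp_log_lip hm0 (hm t ht).1 (hm 0 h0m).1
      have h2 : |Complex.abs (u t) - Complex.abs (u 0)| ≤ Kv * Complex.abs t :=
        le_trans (Complex.abs.abs_abv_sub_le_abv_sub _ _) ((hlip t ht).1)
      calc |Real.log (Complex.abs (u t)) - Real.log (Complex.abs (u 0))|
          ≤ |Complex.abs (u t) - Complex.abs (u 0)| / m := h1
        _ ≤ Kv * Complex.abs t / m := by gcongr
    have hv1 : |Real.log (Complex.abs (v t)) - Real.log (Complex.abs (v 0))| ≤
        Kv * Complex.abs t / m := by
      have h1 := hlp_log_lip hm0 (hm t ht).2 (hm 0 h0m).2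
      have h2 : |Complex.abs (v t) - Complex.abs (v 0)| ≤ Kv * Complex.abs t :=
        le_trans (Complex.abs.abs_abv_sub_le_abv_sub _ _) ((hlip t ht).2)
      calc |Real.log (Complex.abs (v t)) - Real.log (Complex.abs (v 0))|
          ≤ |Complex.abs (v t) - Complex.abs (v 0)| / m := h1
        _ ≤ Kv * Complex.abs t / m := by gcongr
    have hp : (0:ℝ) ≤ (p:ℝ) := Nat.cast_nonneg p
    have hq : (0:ℝ) ≤ (q:ℝ) := Nat.cast_nonneg q
    calc |c t - c 0|
        = |(p:ℝ) * (Real.log (Complex.abs (v t)) - Real.log (Complex.abs (v 0))) -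
           (q:ℝ) * (Real.log (Complex.abs (u t)) - Real.log (Complex.abs (u 0)))| := by
          simp only [hcdef]; ring_nf
      _ ≤ (p:ℝ) * |Real.log (Complex.abs (v t)) - Real.log (Complex.abs (v 0))| +
          (q:ℝ) * |Real.log (Complex.abs (u t)) - Real.log (Complex.abs (u 0))| := by
          refine le_trans (abs_sub _ _) ?_
          rw [abs_mul, abs_mul, Nat.abs_cast, Nat.abs_cast]
      _ ≤ (p:ℝ) * (Kv * Complex.abs t / m) + (q:ℝ) * (Kv * Complex.abs t / m) := by
          refine add_le_add (mul_le_mul_of_nonneg_left hv1 hp)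
            (mul_le_mul_of_nonneg_left hu1 hq)
      _ = Lc * Complex.abs t := by simp only [hLcdef]; field_simp
  -- differentiability of g with derivative expressed through W
  have hTopen : IsOpen (Metric.ball (0:ℂ) r \ {0}) :=
    Metric.isOpen_ball.sdiff isClosed_singleton
  have hderiv : ∀ t : ℂ, t ≠ 0 → Complex.abs t < ε →
      HasFDerivAt g (Complex.imCLM.comp
        (((W t) • (ContinuousLinearMap.id ℂ ℂ)).restrictScalars ℝ)) t := by
    intro t ht0 htε
    have htr : t ∈ Metric.ball (0:ℂ) r := by
      simp only [Metric.mem_ball, Complex.dist_eq, sub_zero]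
      exact lt_of_lt_of_le htε hεr
    have htT : t ∈ Metric.ball (0:ℂ) r \ {0} := ⟨htr, by simpa using ht0⟩
    have hxd : HasDerivAt x (deriv x t) t := (hφ1 t htr).differentiableAt.hasDerivAt
    have hyd : HasDerivAt y (deriv y t) t := (hφ2 t htr).differentiableAt.hasDerivAt
    have hφd : HasDerivAt φ (deriv x t, deriv y t) t := hxd.prodMk hyd
    have hφF : HasFDerivAt φ ((ContinuousLinearMap.smulRight (1 : ℂ →L[ℂ] ℂ)
        ((deriv x t, deriv y t) : ℂ × ℂ)).restrictScalars ℝ) t :=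
      hφd.hasFDerivAt.restrictScalars ℝ
    have hVd : HasFDerivWithinAt V (etaL (φ t)) (Csm P) (φ t) := hV (φ t) (hφC t htr ht0)
    have hmaps : Set.MapsTo φ (Metric.ball (0:ℂ) r \ {0}) (Csm P) := fun z hz =>
      hφC z hz.1 (by simpa using hz.2)
    have hcomp : HasFDerivWithinAt g
        ((etaL (φ t)).comp ((ContinuousLinearMap.smulRight (1 : ℂ →L[ℂ] ℂ)
          ((deriv x t, deriv y t) : ℂ × ℂ)).restrictScalars ℝ))
        (Metric.ball (0:ℂ) r \ {0}) t :=
      hVd.comp t hφF.hasFDerivWithinAt hmaps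
    have hat := hcomp.hasFDerivAt (hTopen.mem_nhds htT)
    have hEq : (etaL (φ t)).comp ((ContinuousLinearMap.smulRight (1 : ℂ →L[ℂ] ℂ)
        ((deriv x t, deriv y t) : ℂ × ℂ)).restrictScalars ℝ) =
        Complex.imCLM.comp (((W t) • (ContinuousLinearMap.id ℂ ℂ)).restrictScalars ℝ) := by
      apply ContinuousLinearMap.ext
      intro h
      have key : (Real.log (Complex.abs (y t)) : ℂ) * ((x t)⁻¹ * (h * deriv x t)) -
          (Real.log (Complex.abs (x t)) : ℂ) * ((y t)⁻¹ * (h * deriv y t)) = W t * h := by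
        simp only [hWdef]; ring
      have lhs_eval : ((etaL (φ t)).comp ((ContinuousLinearMap.smulRight (1 : ℂ →L[ℂ] ℂ)
          ((deriv x t, deriv y t) : ℂ × ℂ)).restrictScalars ℝ)) h =
          Real.log (Complex.abs (y t)) * ((x t)⁻¹ * (h * deriv x t)).im -
          Real.log (Complex.abs (x t)) * ((y t)⁻¹ * (h * deriv y t)).im := by
        simp [etaL, smul_eq_mul, hxdef, hydef]
      have rhs_eval : (Complex.imCLM.comp
          (((W t) • (ContinuousLinearMap.id ℂ ℂ)).restrictScalars ℝ)) h = (W t * h).im := by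
        simp
      rw [lhs_eval, rhs_eval, ← key]
      simp
    rw [hEq] at hat
    exact hat
  -- derivative along circles
  have hgd2 : ∀ (ρ θ : ℝ), 0 < ρ → ρ ≤ ε2 →
      HasDerivAt (fun θ' : ℝ => g ((ρ:ℂ) * Complex.exp ((θ':ℂ) * Complex.I)))
        ((W ((ρ:ℂ) * Complex.exp ((θ:ℂ) * Complex.I)) *
          ((ρ:ℂ) * Complex.exp ((θ:ℂ) * Complex.I) * Complex.I)).im) θ := by
    intro ρ θ hρ hρε
    have hγ : HasDerivAt (fun θ' : ℝ => (ρ:ℂ) * Complex.exp ((θ':ℂ) * Complex.I))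
        ((ρ:ℂ) * Complex.exp ((θ:ℂ) * Complex.I) * Complex.I) θ := by
      have h1 : HasDerivAt (fun θ' : ℝ => ((θ':ℂ) * Complex.I)) Complex.I θ := by
        simpa using (Complex.ofRealCLM.hasDerivAt (x := θ)).mul_const Complex.I
      have h2 := h1.cexp.const_mul (ρ:ℂ)
      rw [mul_assoc]; exact h2
    have ht0 : ((ρ:ℂ) * Complex.exp ((θ:ℂ) * Complex.I)) ≠ 0 :=
      mul_ne_zero (by exact_mod_cast hρ.ne') (Complex.exp_ne_zero _)
    have htabs : Complex.abs ((ρ:ℂ) * Complex.exp ((θ:ℂ) * Complex.I)) = ρ := by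
      rw [map_mul, Complex.abs_ofReal, Complex.abs_exp_ofReal_mul_I, _root_.abs_of_pos hρ,
        mul_one]
    have hd := (hderiv _ ht0 (by rw [htabs]; exact lt_of_le_of_lt hρε hε2ε)).comp_hasDerivAt θ hγ
    simpa [Function.comp_def] using hd
  -- the circle integral argument : c 0 = 0
  have hc0 : c 0 = 0 := by
    have key : ∀ ρ : ℝ, 0 < ρ → ρ ≤ ε2 →
        |c 0| ≤ ρ * (K1' - K2 * Real.log ρ) + Lc * ρ := by
      intro ρ hρ hρε
      set γ : ℝ → ℂ := fun θ' => (ρ:ℂ) * Complex.exp ((θ':ℂ) * Complex.I) with hγdef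
      have habsγ : ∀ θ : ℝ, Complex.abs (γ θ) = ρ := by
        intro θ
        rw [hγdef]
        simp only []
        rw [map_mul, Complex.abs_ofReal, Complex.abs_exp_ofReal_mul_I, _root_.abs_of_pos hρ,
          mul_one]
      have hγ0 : ∀ θ : ℝ, γ θ ≠ 0 := fun θ =>
        mul_ne_zero (by exact_mod_cast hρ.ne') (Complex.exp_ne_zero _)
      have hγcb : ∀ θ : ℝ, γ θ ∈ Metric.closedBall (0:ℂ) ε2 := by
        intro θ
        simpa [Metric.mem_closedBall, Complex.dist_eq] using (habsγ θ).le.trans hρε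
      -- derivative bound for f θ = g (γ θ) - c 0 * θ
      have hfd : ∀ θ : ℝ, HasDerivAt (fun θ' : ℝ => g (γ θ') - c 0 * θ')
          ((W (γ θ) * (γ θ * Complex.I)).im - c 0) θ := by
        intro θ
        have h := (hgd2 ρ θ hρ hρε).sub ((hasDerivAt_id θ).const_mul (c 0))
        simp only [mul_one, id_eq] at h
        exact h
      have hbd : ∀ θ : ℝ, |(W (γ θ) * (γ θ * Complex.I)).im - c 0| ≤
          ρ * (K1' - K2 * Real.log ρ) + Lc * ρ := by
        intro θ
        have him : (W (γ θ) * (γ θ * Complex.I)).im = (W (γ θ) * γ θ).re := by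
          rw [← mul_assoc, Complex.mul_I_im]
        have h1 : |(W (γ θ) * γ θ).re - c (γ θ)| ≤ ρ * (K1' - K2 * Real.log ρ) := by
          have h2 : (W (γ θ) * γ θ).re - c (γ θ) = (W (γ θ) * γ θ - (c (γ θ) : ℂ)).re := by
            simp
          rw [h2]
          refine le_trans (Complex.abs_re_le_norm _) ?_
          have := hE1 (γ θ) (hγ0 θ) (le_of_eq (habsγ θ) |>.trans hρε)
          rwa [habsγ θ] at this
        have h3 : |c (γ θ) - c 0| ≤ Lc * ρ := by
          have := hE2 (γ θ) (hγcb θ)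
          rwa [habsγ θ] at this
        rw [him]
        calc |(W (γ θ) * γ θ).re - c 0|
            = |((W (γ θ) * γ θ).re - c (γ θ)) + (c (γ θ) - c 0)| := by ring_nf
          _ ≤ |(W (γ θ) * γ θ).re - c (γ θ)| + |c (γ θ) - c 0| := abs_add_le _ _
          _ ≤ ρ * (K1' - K2 * Real.log ρ) + Lc * ρ := add_le_add h1 h3
      have hmvt := (convex_univ : Convex ℝ (Set.univ : Set ℝ)).norm_image_sub_le_of_norm_hasDerivWithin_le
        (f := fun θ' : ℝ => g (γ θ') - c 0 * θ')
        (f' := fun θ : ℝ => (W (γ θ) * (γ θ * Complex.I)).im - c 0)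
        (fun θ _ => (hfd θ).hasDerivWithinAt)
        (fun θ _ => by simpa [Real.norm_eq_abs] using hbd θ)
        (Set.mem_univ (0:ℝ)) (Set.mem_univ (2 * Real.pi))
      have hexp : Complex.exp (((2 * Real.pi : ℝ) : ℂ) * Complex.I) =
          Complex.exp (((0:ℝ) : ℂ) * Complex.I) := by
        rw [show ((2 * Real.pi : ℝ) : ℂ) * Complex.I = 2 * (Real.pi : ℂ) * Complex.I by
          push_cast; ring, Complex.exp_two_pi_mul_I]
        norm_num
      have hγeq : γ (2 * Real.pi) = γ 0 := by
        simp only [hγdef]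
        rw [hexp]
      simp only [hγeq] at hmvt
      have hsimp : g (γ 0) - c 0 * (2 * Real.pi) - (g (γ 0) - c 0 * 0) = -(c 0 * (2 * Real.pi)) := by
        ring
      simp only [hsimp] at hmvt
      have hπ : (0:ℝ) < 2 * Real.pi := by positivity
      have h5 : |c 0| * (2 * Real.pi) ≤
          (ρ * (K1' - K2 * Real.log ρ) + Lc * ρ) * (2 * Real.pi) := by
        have h6 : ‖-(c 0 * (2 * Real.pi))‖ = |c 0| * (2 * Real.pi) := by
          rw [norm_neg, Real.norm_eq_abs, abs_mul, _root_.abs_of_pos hπ]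
        have h7 : ‖(2 * Real.pi : ℝ) - 0‖ = 2 * Real.pi := by
          rw [sub_zero, Real.norm_eq_abs, _root_.abs_of_pos hπ]
        rw [h6] at hmvt
        rw [h7] at hmvt
        exact hmvt
      exact le_of_mul_le_mul_right h5 hπ
    have hlim : Filter.Tendsto (fun ρ : ℝ => (K1' + Lc) * ρ + K2 * (2 * Real.sqrt ρ))
        (nhdsWithin 0 (Set.Ioi 0)) (nhds 0) := by
      have hcont : Continuous (fun ρ : ℝ => (K1' + Lc) * ρ + K2 * (2 * Real.sqrt ρ)) :=
        (continuous_const.mul continuous_id).add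
          (continuous_const.mul (continuous_const.mul Real.continuous_sqrt))
      have h0 : Filter.Tendsto (fun ρ : ℝ => (K1' + Lc) * ρ + K2 * (2 * Real.sqrt ρ))
          (nhdsWithin (0:ℝ) (Set.Ioi 0)) (nhds ((K1' + Lc) * 0 + K2 * (2 * Real.sqrt 0))) :=
        (hcont.tendsto 0).mono_left nhdsWithin_le_nhds
      simpa using h0
    have hev : ∀ᶠ ρ in nhdsWithin (0:ℝ) (Set.Ioi 0),
        |c 0| ≤ (K1' + Lc) * ρ + K2 * (2 * Real.sqrt ρ) := by
      filter_upwards [Ioc_mem_nhdsGT_of_mem ⟨le_refl (0:ℝ), hε2⟩] with ρ hρ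
      have h1 := key ρ hρ.1 hρ.2
      have h2 : ρ * (-Real.log ρ) ≤ 2 * Real.sqrt ρ := hlp_slog hρ.1
      have h3 : ρ * (K1' - K2 * Real.log ρ) + Lc * ρ ≤
          (K1' + Lc) * ρ + K2 * (2 * Real.sqrt ρ) := by nlinarith
      linarith
    have hle : |c 0| ≤ 0 := ge_of_tendsto hlim hev
    exact abs_eq_zero.mp (le_antisymm hle (abs_nonneg _))
  -- full bound for W
  set K1 : ℝ := Lc + K1' with hK1def
  have hK1nn : 0 ≤ K1 := by positivity
  have hWfull : ∀ t : ℂ, t ≠ 0 → Complex.abs t ≤ ε2 →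
      Complex.abs (W t) ≤ K1 - K2 * Real.log (Complex.abs t) := by
    intro t ht0 htε
    have habs : 0 < Complex.abs t := Complex.abs.pos ht0
    have htcb : t ∈ Metric.closedBall (0:ℂ) ε2 := by
      simpa [Metric.mem_closedBall, Complex.dist_eq] using htε
    have h2 : |c t| ≤ Lc * Complex.abs t := by
      have := hE2 t htcb
      rwa [hc0, sub_zero] at this
    have h3 := hE1 t ht0 htε
    have h4 : Complex.abs (W t) * Complex.abs t ≤
        (K1 - K2 * Real.log (Complex.abs t)) * Complex.abs t := by
      rw [← map_mul]
      calc Complex.abs (W t * t)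
          = Complex.abs ((W t * t - (c t : ℂ)) + (c t : ℂ)) := by ring_nf
        _ ≤ Complex.abs (W t * t - (c t : ℂ)) + Complex.abs ((c t : ℂ)) :=
            Complex.abs.add_le _ _
        _ ≤ Complex.abs t * (K1' - K2 * Real.log (Complex.abs t)) + Lc * Complex.abs t := by
            refine add_le_add h3 ?_
            rw [Complex.abs_ofReal]
            exact h2
        _ = (K1 - K2 * Real.log (Complex.abs t)) * Complex.abs t := by
            simp only [hK1def]; ring
    exact le_of_mul_le_mul_right h4 habs
  -- the primitive of the derivative bound
  set Bf : ℝ → ℝ := fun s => K1 * s + K2 * (s - s * Real.log s) with hBfdef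
  have hBfd : ∀ s : ℝ, 0 < s → HasDerivAt Bf (K1 - K2 * Real.log s) s := by
    intro s hs
    have h1 : HasDerivAt (fun s' : ℝ => s' * Real.log s') (Real.log s + 1) s := by
      exact ((hasDerivAt_id' s).mul (Real.hasDerivAt_log hs.ne')).congr_deriv
        (by rw [mul_inv_cancel₀ hs.ne']; ring)
    have h2 : HasDerivAt (fun s' : ℝ => K1 * s') K1 s := by
      simpa using (hasDerivAt_id s).const_mul K1
    have h3 : HasDerivAt (fun s' : ℝ => s' - s' * Real.log s') (1 - (Real.log s + 1)) s :=
      (hasDerivAt_id s).sub h1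
    have h4 := h2.add (h3.const_mul K2)
    have h5 : K1 * 1 + K2 * (1 - (Real.log s + 1)) = K1 - K2 * Real.log s := by ring
    rw [← h5]
    exact h4.congr_deriv (by ring)
  have hBfnn : ∀ s : ℝ, 0 < s → s ≤ 1 → 0 ≤ Bf s := by
    intro s hs hs1
    have hlog : Real.log s ≤ 0 := Real.log_nonpos hs.le hs1
    simp only [hBfdef]
    have h1 : s * Real.log s ≤ 0 := by
      have := mul_le_mul_of_nonneg_left hlog hs.le
      simpa using this
    exact add_nonneg (mul_nonneg hK1nn hs.le) (mul_nonneg hK2nn (by linarith))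
  -- radial estimate
  have radial : ∀ (e : ℂ), Complex.abs e = 1 → ∀ a ρ : ℝ, 0 < a → a ≤ ρ → ρ ≤ ε2 →
      |g ((ρ:ℂ) * e) - g ((a:ℂ) * e)| ≤ Bf ρ - Bf a := by
    intro e he a ρ ha haρ hρε
    have he0 : e ≠ 0 := fun h => by simp [h] at he
    have habse : ∀ s : ℝ, Complex.abs ((s:ℂ) * e) = |s| := by
      intro s; rw [map_mul, Complex.abs_ofReal, he, mul_one]
    have hne : ∀ s : ℝ, 0 < s → ((s:ℂ) * e) ≠ 0 := fun s hs =>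
      mul_ne_zero (by exact_mod_cast hs.ne') he0
    have hγd : ∀ s : ℝ, HasDerivAt (fun s' : ℝ => (s':ℂ) * e) e s := fun s => by
      simpa using (Complex.ofRealCLM.hasDerivAt (x := s)).mul_const e
    have hgd : ∀ s : ℝ, 0 < s → s ≤ ε2 → HasDerivAt (fun s' : ℝ => g ((s':ℂ) * e))
        ((W ((s:ℂ) * e) * e).im) s := by
      intro s hs hsε
      have h := (hderiv ((s:ℂ)*e) (hne s hs) (by
        rw [habse s, _root_.abs_of_pos hs]; exact lt_of_le_of_lt hsε hε2ε)).comp_hasDerivAt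
        s (hγd s)
      simpa [Function.comp_def] using h
    have hcont : ContinuousOn (fun s : ℝ => g ((s:ℂ) * e) - g ((a:ℂ) * e)) (Set.Icc a ρ) := by
      intro s hs
      exact (((hgd s (lt_of_lt_of_le ha hs.1) (le_trans hs.2 hρε)).continuousAt).sub
        continuousAt_const).continuousWithinAt
    have hBcont : ContinuousOn (fun s : ℝ => Bf s - Bf a) (Set.Icc a ρ) := by
      intro s hs
      exact (((hBfd s (lt_of_lt_of_le ha hs.1)).continuousAt).sub
        continuousAt_const).continuousWithinAt
    have happ := image_norm_le_of_norm_deriv_right_le_deriv_boundary' hcont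
      (fun s hs => (((hgd s (lt_of_lt_of_le ha hs.1) (le_trans hs.2.le hρε)).sub_const
        (g ((a:ℂ) * e))).hasDerivWithinAt))
      (by simp)
      hBcont
      (fun s hs => (((hBfd s (lt_of_lt_of_le ha hs.1)).sub_const (Bf a)).hasDerivWithinAt))
      (fun s hs => by
        have hs0 : 0 < s := lt_of_lt_of_le ha hs.1
        have hsε : s ≤ ε2 := le_trans hs.2.le hρε
        have h1 : Complex.abs (W ((s:ℂ) * e) * e) ≤ K1 - K2 * Real.log s := by
          rw [map_mul, he, mul_one]
          have := hWfull ((s:ℂ)*e) (hne s hs0) (by rw [habse s, _root_.abs_of_pos hs0]; exact hsε)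
          rwa [habse s, _root_.abs_of_pos hs0] at this
        calc ‖(W ((s:ℂ) * e) * e).im‖ ≤ Complex.abs (W ((s:ℂ) * e) * e) :=
              Complex.abs_im_le_norm _
          _ ≤ K1 - K2 * Real.log s := h1)
    have := happ (Set.right_mem_Icc.mpr haρ)
    simpa [Real.norm_eq_abs] using this
  -- arc estimate
  have arc : ∀ ρ θ₁ θ₂ : ℝ, 0 < ρ → ρ ≤ ε2 →
      |g ((ρ:ℂ) * Complex.exp ((θ₂:ℂ) * Complex.I)) -
       g ((ρ:ℂ) * Complex.exp ((θ₁:ℂ) * Complex.I))| ≤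
      ((K1 - K2 * Real.log ρ) * ρ) * |θ₂ - θ₁| := by
    intro ρ θ₁ θ₂ hρ hρε
    have hbound : ∀ θ : ℝ, ‖(W ((ρ:ℂ) * Complex.exp ((θ:ℂ) * Complex.I)) *
        ((ρ:ℂ) * Complex.exp ((θ:ℂ) * Complex.I) * Complex.I)).im‖ ≤
        (K1 - K2 * Real.log ρ) * ρ := by
      intro θ
      have htabs : Complex.abs ((ρ:ℂ) * Complex.exp ((θ:ℂ) * Complex.I)) = ρ := by
        rw [map_mul, Complex.abs_ofReal, Complex.abs_exp_ofReal_mul_I, _root_.abs_of_pos hρ,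
          mul_one]
      have ht0 : ((ρ:ℂ) * Complex.exp ((θ:ℂ) * Complex.I)) ≠ 0 :=
        mul_ne_zero (by exact_mod_cast hρ.ne') (Complex.exp_ne_zero _)
      have hW := hWfull _ ht0 (by rw [htabs]; exact hρε)
      rw [htabs] at hW
      calc ‖(W ((ρ:ℂ) * Complex.exp ((θ:ℂ) * Complex.I)) *
            ((ρ:ℂ) * Complex.exp ((θ:ℂ) * Complex.I) * Complex.I)).im‖
          ≤ Complex.abs (W ((ρ:ℂ) * Complex.exp ((θ:ℂ) * Complex.I)) *
            ((ρ:ℂ) * Complex.exp ((θ:ℂ) * Complex.I) * Complex.I)) := Complex.abs_im_le_norm _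
        _ = Complex.abs (W ((ρ:ℂ) * Complex.exp ((θ:ℂ) * Complex.I))) * ρ := by
            rw [map_mul, map_mul, htabs, Complex.abs_I, mul_one]
        _ ≤ (K1 - K2 * Real.log ρ) * ρ := mul_le_mul_of_nonneg_right hW hρ.le
    have hmvt := (convex_univ : Convex ℝ (Set.univ : Set ℝ)).norm_image_sub_le_of_norm_hasDerivWithin_le
      (fun θ _ => (hgd2 ρ θ hρ hρε).hasDerivWithinAt)
      (fun θ _ => hbound θ)
      (Set.mem_univ θ₁) (Set.mem_univ θ₂)
    simpa [Real.norm_eq_abs] using hmvt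
  -- the filter is nontrivial
  have hfeq : nhdsWithin (0:ℂ) (Metric.ball (0:ℂ) r \ {0}) =
      nhdsWithin (0:ℂ) {(0:ℂ)}ᶜ := by
    rw [Set.diff_eq, Set.inter_comm]
    exact nhdsWithin_inter_of_mem' (mem_nhdsWithin_of_mem_nhds (Metric.ball_mem_nhds _ hr))
  haveI hNB : (nhdsWithin (0:ℂ) (Metric.ball (0:ℂ) r \ {0})).NeBot := by
    rw [hfeq]; infer_instance
  -- conclusion via the Cauchy criterion
  apply hlp_cauchy
  intro δ hδ
  -- choose a suitable ρ
  have hΨlim : Filter.Tendsto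
      (fun ρ : ℝ => (2*(K1+K2) + 2*Real.pi*K1) * ρ + (4*K2 + 4*Real.pi*K2) * Real.sqrt ρ)
      (nhdsWithin (0:ℝ) (Set.Ioi 0)) (nhds 0) := by
    have hcont : Continuous
        (fun ρ : ℝ => (2*(K1+K2) + 2*Real.pi*K1) * ρ + (4*K2 + 4*Real.pi*K2) * Real.sqrt ρ) :=
      (continuous_const.mul continuous_id).add (continuous_const.mul Real.continuous_sqrt)
    have h0 : Filter.Tendsto
        (fun ρ : ℝ => (2*(K1+K2) + 2*Real.pi*K1) * ρ + (4*K2 + 4*Real.pi*K2) * Real.sqrt ρ)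
        (nhdsWithin (0:ℝ) (Set.Ioi 0))
        (nhds ((2*(K1+K2) + 2*Real.pi*K1) * 0 + (4*K2 + 4*Real.pi*K2) * Real.sqrt 0)) :=
      (hcont.tendsto 0).mono_left nhdsWithin_le_nhds
    simpa using h0
  have hevδ : ∀ᶠ ρ in nhdsWithin (0:ℝ) (Set.Ioi 0),
      ((2*(K1+K2) + 2*Real.pi*K1) * ρ + (4*K2 + 4*Real.pi*K2) * Real.sqrt ρ < δ ∧
        ρ ∈ Set.Ioc (0:ℝ) ε2) :=
    (hΨlim.eventually (gt_mem_nhds hδ)).and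
      (by exact Ioc_mem_nhdsGT_of_mem ⟨le_refl (0:ℝ), hε2⟩)
  obtain ⟨ρ, hΨρ, hρmem⟩ := hevδ.exists
  have hρpos : 0 < ρ := hρmem.1
  have hρε2 : ρ ≤ ε2 := hρmem.2
  have hρ1 : ρ ≤ 1 := le_trans hρε2 hε2one.le
  have hlogρ : Real.log ρ ≤ 0 := Real.log_nonpos hρpos.le hρ1
  refine ⟨Metric.ball (0:ℂ) ρ ∩ (Metric.ball (0:ℂ) r \ {0}),
    inter_mem (mem_nhdsWithin_of_mem_nhds (Metric.ball_mem_nhds _ hρpos))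
      self_mem_nhdsWithin, ?_⟩
  have estim : ∀ w : ℂ, w ≠ 0 → Complex.abs w < ρ →
      |g ((ρ:ℂ) * Complex.exp ((Complex.arg w : ℂ) * Complex.I)) - g w| ≤ Bf ρ := by
    intro w hw0 hwρ
    have ha : 0 < Complex.abs w := Complex.abs.pos hw0
    have he : Complex.abs (Complex.exp ((Complex.arg w : ℂ) * Complex.I)) = 1 :=
      Complex.abs_exp_ofReal_mul_I _
    have hradial := radial _ he (Complex.abs w) ρ ha hwρ.le hρε2
    have hrw : ((Complex.abs w : ℝ) : ℂ) * Complex.exp ((Complex.arg w : ℂ) * Complex.I) = w :=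
      Complex.abs_mul_exp_arg_mul_I w
    rw [hrw] at hradial
    have hBfa : 0 ≤ Bf (Complex.abs w) :=
      hBfnn _ ha (le_trans hwρ.le hρ1)
    linarith [hradial]
  rintro t ⟨htρ, htr, ht0⟩ s ⟨hsρ, hsr, hs0⟩
  have ht0' : t ≠ 0 := by simpa using ht0
  have hs0' : s ≠ 0 := by simpa using hs0
  have htρ' : Complex.abs t < ρ := by simpa [Complex.dist_eq] using htρ
  have hsρ' : Complex.abs s < ρ := by simpa [Complex.dist_eq] using hsρ
  have h1 := estim t ht0' htρ'
  have h3 := estim s hs0' hsρ'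
  have harc := arc ρ (Complex.arg s) (Complex.arg t) hρpos hρε2
  have hargb : |Complex.arg t - Complex.arg s| ≤ 2 * Real.pi := by
    calc |Complex.arg t - Complex.arg s| ≤ |Complex.arg t| + |Complex.arg s| := abs_sub _ _
      _ ≤ Real.pi + Real.pi := add_le_add (Complex.abs_arg_le_pi t) (Complex.abs_arg_le_pi s)
      _ = 2 * Real.pi := by ring
  have hC0 : 0 ≤ (K1 - K2 * Real.log ρ) * ρ := by
    have hK2log : 0 ≤ -(K2 * Real.log ρ) := by
      have := mul_le_mul_of_nonneg_left hlogρ hK2nn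
      simpa using this
    apply mul_nonneg (by linarith) hρpos.le
  have h2 : |g ((ρ:ℂ) * Complex.exp ((Complex.arg t : ℂ) * Complex.I)) -
      g ((ρ:ℂ) * Complex.exp ((Complex.arg s : ℂ) * Complex.I))| ≤
      ((K1 - K2 * Real.log ρ) * ρ) * (2 * Real.pi) :=
    le_trans harc (mul_le_mul_of_nonneg_left hargb hC0)
  have hsum : |g t - g s| ≤ 2 * Bf ρ + ((K1 - K2 * Real.log ρ) * ρ) * (2 * Real.pi) := by
    have e1 : g t - g s =
        -(g ((ρ:ℂ) * Complex.exp ((Complex.arg t : ℂ) * Complex.I)) - g t) +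
        ((g ((ρ:ℂ) * Complex.exp ((Complex.arg t : ℂ) * Complex.I)) -
          g ((ρ:ℂ) * Complex.exp ((Complex.arg s : ℂ) * Complex.I))) +
         (g ((ρ:ℂ) * Complex.exp ((Complex.arg s : ℂ) * Complex.I)) - g s)) := by ring
    rw [e1]
    calc |_ + (_ + _)| ≤ |-(g ((ρ:ℂ) * Complex.exp ((Complex.arg t : ℂ) * Complex.I)) - g t)| +
          (|g ((ρ:ℂ) * Complex.exp ((Complex.arg t : ℂ) * Complex.I)) -
            g ((ρ:ℂ) * Complex.exp ((Complex.arg s : ℂ) * Complex.I))| +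
           |g ((ρ:ℂ) * Complex.exp ((Complex.arg s : ℂ) * Complex.I)) - g s|) :=
        le_trans (abs_add_le _ _) (by gcongr; exact abs_add_le _ _)
      _ ≤ Bf ρ + (((K1 - K2 * Real.log ρ) * ρ) * (2 * Real.pi) + Bf ρ) := by
          rw [abs_neg]
          exact add_le_add h1 (add_le_add h2 h3)
      _ = 2 * Bf ρ + ((K1 - K2 * Real.log ρ) * ρ) * (2 * Real.pi) := by ring
  have hslog := hlp_slog hρpos
  have hπ0 : (0:ℝ) ≤ Real.pi := Real.pi_pos.le
  have hfinal : 2 * Bf ρ + ((K1 - K2 * Real.log ρ) * ρ) * (2 * Real.pi) ≤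
      (2*(K1+K2) + 2*Real.pi*K1) * ρ + (4*K2 + 4*Real.pi*K2) * Real.sqrt ρ := by
    simp only [hBfdef]
    nlinarith [mul_le_mul_of_nonneg_left hslog hK2nn,
      mul_le_mul_of_nonneg_left hslog (mul_nonneg hπ0 hK2nn)]
  calc |g t - g s| ≤ 2 * Bf ρ + ((K1 - K2 * Real.log ρ) * ρ) * (2 * Real.pi) := hsum
    _ ≤ (2*(K1+K2) + 2*Real.pi*K1) * ρ + (4*K2 + 4*Real.pi*K2) * Real.sqrt ρ := hfinal
    _ < δ := hΨρ
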